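/- Let d ≥ 2, let Λ ⊂ ℝ^d be a lattice of full rank d, and let D ⊂ ℝ^d be a bounded convex set with D = −D. Let P¹ = {v ∈ Λ ∩ D : v is primitive in Λ} and P² = {(v1, v2) ∈ (Λ ∩ D) × (Λ ∩ D) : (v1, v2) is a primitive pair in Λ}. If the cardinality of P¹ is greater than 2, then |P¹| ≤ (1/2) · |P²|. -/

import Mathlib

/-- `v` is primitive in the lattice `Λ`: it is an element of some `ℤ`-basis of `Λ`
(equivalently, the first element of some `ℤ`-basis). -/
def IsPrimitiveVec (d : ℕ) (Λ : Submodule ℤ (Fin d → ℝ)) (v : Fin d → ℝ) : Prop :=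
  ∃ (b : Module.Basis (Fin d) ℤ Λ) (k : Fin d), ((b k : Λ) : Fin d → ℝ) = v

/-- `(v₁, v₂)` is a primitive pair in the lattice `Λ`: they are two distinct elements
of some `ℤ`-basis of `Λ` (equivalently, the first two elements of some `ℤ`-basis). -/
def IsPrimitivePair (d : ℕ) (Λ : Submodule ℤ (Fin d → ℝ)) (v₁ v₂ : Fin d → ℝ) : Prop :=
  ∃ (b : Module.Basis (Fin d) ℤ Λ) (k l : Fin d), k ≠ l ∧
    ((b k : Λ) : Fin d → ℝ) = v₁ ∧ ((b l : Λ) : Fin d → ℝ) = v₂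

open Finset in
lemma finset_gcd_bezout {ι : Type*} [DecidableEq ι] (s : Finset ι) (f : ι → ℤ) :
    ∃ c : ι → ℤ, ∑ i ∈ s, c i * f i = s.gcd f := by
  induction s using Finset.induction_on with
  | empty => exact ⟨0, by simp⟩
  | @insert a s ha ih =>
    obtain ⟨c, hc⟩ := ih
    obtain ⟨x, y, hxy⟩ := exists_gcd_eq_mul_add_mul (f a) (s.gcd f)
    refine ⟨Function.update (fun i => y * c i) a x, ?_⟩
    rw [Finset.sum_insert ha, Finset.gcd_insert, hxy, Function.update_self]
    rw [Finset.sum_congr rfl (fun i hi => by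
      rw [Function.update_of_ne (by rintro rfl; exact ha hi)]), ← hc]
    rw [Finset.sum_mul]
    rw [Finset.sum_congr rfl (fun i _ => by ring : ∀ i ∈ s, y * c i * f i = c i * f i * y)]
    ring

lemma symm_convex_mem {d : ℕ} {D : Set (Fin d → ℝ)} (hD : Convex ℝ D) (hsymm : -D = D)
    {x y : Fin d → ℝ} (hx : x ∈ D) (hy : y ∈ D) {α β : ℝ} (h : |α| + |β| ≤ 1) :
    α • x + β • y ∈ D := by
  have hneg : ∀ z ∈ D, -z ∈ D := fun z hz => by
    rw [← hsymm]; exact Set.neg_mem_neg.mpr hz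
  have h0 : (0 : Fin d → ℝ) ∈ D := by
    have := hD hx (hneg x hx) (by norm_num) (by norm_num)
      (by norm_num : (1/2 : ℝ) + 1/2 = 1)
    simpa [smul_neg] using this
  set x' := if 0 ≤ α then x else -x with hx'def
  set y' := if 0 ≤ β then y else -y with hy'def
  have hx' : x' ∈ D := by rw [hx'def]; split <;> [exact hx; exact hneg x hx]
  have hy' : y' ∈ D := by rw [hy'def]; split <;> [exact hy; exact hneg y hy]
  have hax : α • x = |α| • x' := by
    rw [hx'def]; split
    · rw [abs_of_nonneg ‹_›]
    · rw [abs_of_neg (lt_of_not_ge ‹_›), smul_neg, neg_smul, neg_neg]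
  have hay : β • y = |β| • y' := by
    rw [hy'def]; split
    · rw [abs_of_nonneg ‹_›]
    · rw [abs_of_neg (lt_of_not_ge ‹_›), smul_neg, neg_smul, neg_neg]
  have key : ∑ i : Fin 3, (![|α|, |β|, 1 - (|α| + |β|)] i) • (![x', y', 0] i) ∈ D := by
    apply hD.sum_mem
    · intro i _
      fin_cases i <;> simp [abs_nonneg, sub_nonneg.mpr h]
    · rw [Fin.sum_univ_three]; simp
    · intro i _; fin_cases i <;> simp [hx', hy', h0]
  rw [Fin.sum_univ_three] at key
  simpa [hax, hay] using key

lemma exists_basis_pair {d : ℕ} {R M : Type*} [CommRing R] [IsDomain R]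
    [IsPrincipalIdealRing R] [AddCommGroup M] [Module R M]
    (b₀ : Module.Basis (Fin d) R M) {x y : M} {ψ : M →ₗ[R] R × R}
    (hx : ψ x = (1, 0)) (hy : ψ y = (0, 1)) :
    ∃ (b : Module.Basis (Fin d) R M) (k l : Fin d), k ≠ l ∧ b k = x ∧ b l = y := by
  classical
  set σ : (R × R) →ₗ[R] M :=
    (LinearMap.toSpanSingleton R M x).coprod (LinearMap.toSpanSingleton R M y) with hσdef
  have hσapp : ∀ p : R × R, σ p = p.1 • x + p.2 • y := fun p => rfl
  have hσ : ∀ p : R × R, ψ (σ p) = p := by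
    intro p
    rw [hσapp, map_add, LinearMap.map_smul, LinearMap.map_smul, hx, hy]
    ext <;> simp
  have hinj : Function.Injective σ := fun p q hpq => by
    have := congrArg ψ hpq; rwa [hσ, hσ] at this
  have hcompl : IsCompl (LinearMap.range σ) (LinearMap.ker ψ) := by
    constructor
    · rw [Submodule.disjoint_def]
      rintro z ⟨p, rfl⟩ hz
      rw [LinearMap.mem_ker, hσ] at hz
      rw [hz, map_zero]
    · rw [codisjoint_iff, eq_top_iff]
      intro z _
      have hzker : z - σ (ψ z) ∈ LinearMap.ker ψ := by
        rw [LinearMap.mem_ker, map_sub, hσ, sub_self]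
      have hdec : z = σ (ψ z) + (z - σ (ψ z)) := by abel
      rw [hdec]
      exact Submodule.add_mem_sup (LinearMap.mem_range_self _ _) hzker
  obtain ⟨n, bK⟩ := Submodule.basisOfPid b₀ (LinearMap.ker ψ)
  set bR : Module.Basis (Fin 2) R (LinearMap.range σ) :=
    (Module.Basis.finTwoProd R).map (LinearEquiv.ofInjective σ hinj) with hbRdef
  set bM : Module.Basis (Fin 2 ⊕ Fin n) R M :=
    (bR.prod bK).map (Submodule.prodEquivOfIsCompl _ _ hcompl) with hbMdef
  have hbMx : ∀ i : Fin 2, bM (Sum.inl i) = σ (Module.Basis.finTwoProd R i) := by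
    intro i
    rw [hbMdef, Module.Basis.map_apply, Module.Basis.prod_apply]
    simp only [Sum.elim_inl, Function.comp_apply]
    have happ : ∀ (a : LinearMap.range σ) (b' : LinearMap.ker ψ),
        Submodule.prodEquivOfIsCompl _ _ hcompl (a, b') = (a : M) + (b' : M) := fun a b' => rfl
    rw [LinearMap.inl_apply, happ]
    simp [hbRdef, LinearEquiv.ofInjective_apply]
  have hbM0 : bM (Sum.inl 0) = x := by
    rw [hbMx, hσapp]; simp [Module.Basis.finTwoProd]
  have hbM1 : bM (Sum.inl 1) = y := by
    rw [hbMx, hσapp]; simp [Module.Basis.finTwoProd]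
  set e : (Fin 2 ⊕ Fin n) ≃ Fin d := bM.indexEquiv b₀ with hedef
  refine ⟨bM.reindex e, e (Sum.inl 0), e (Sum.inl 1), ?_, ?_, ?_⟩
  · simp only [ne_eq, e.injective.eq_iff, Sum.inl.injEq]
    decide
  · rw [Module.Basis.reindex_apply, e.symm_apply_apply, hbM0]
  · rw [Module.Basis.reindex_apply, e.symm_apply_apply, hbM1]

lemma exists_pair_partner {d : ℕ} {Λ : Submodule ℤ (Fin d → ℝ)}
    {D : Set (Fin d → ℝ)} (hD : Convex ℝ D) (hsymm : -D = D)
    {v w : Fin d → ℝ} (hvD : v ∈ D) (hv : IsPrimitiveVec d Λ v)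
    (hwΛ : w ∈ Λ) (hwD : w ∈ D) (hw : IsPrimitiveVec d Λ w)
    (hne1 : w ≠ v) (hne2 : w ≠ -v) :
    ∃ u, u ∈ Λ ∧ u ∈ D ∧ IsPrimitivePair d Λ v u := by
  classical
  obtain ⟨b, k₀, hbk⟩ := hv
  set wt : Λ := ⟨w, hwΛ⟩ with hwtdef
  set c : Fin d → ℤ := fun i => b.repr wt i with hcdef
  -- Step A : some coordinate away from k₀ is nonzero
  have stepA : ∃ i₀, i₀ ≠ k₀ ∧ c i₀ ≠ 0 := by
    by_contra hcon
    push_neg at hcon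
    have hwt : wt = c k₀ • b k₀ := by
      have hsum := b.sum_repr wt
      rw [← hsum]
      rw [Finset.sum_eq_single k₀ (fun i _ hi => by rw [show (b.repr wt) i = c i from rfl, hcon i hi, zero_smul])
        (fun h => absurd (Finset.mem_univ k₀) h)]
    obtain ⟨b', l, hb'l⟩ := hw
    have hb'lw : b' l = wt := Subtype.val_injective hb'l
    have hrepr := congrArg (fun z => b'.repr z l) (hb'lw.trans hwt)
    simp only [Module.Basis.repr_self, map_smul, Finsupp.single_eq_same, Finsupp.smul_apply,
      smul_eq_mul] at hrepr
    -- hrepr : 1 = c k₀ * (b'.repr (b k₀) l)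
    have hn : c k₀ = 1 ∨ c k₀ = -1 := by
      rcases Int.eq_one_or_neg_one_of_mul_eq_one' hrepr.symm with h | h
      · exact Or.inl h.1
      · exact Or.inr h.1
    rcases hn with h1 | h1
    · apply hne1
      have : wt = b k₀ := by rw [hwt, h1, one_smul]
      calc w = ((wt : Fin d → ℝ)) := rfl
        _ = v := by rw [this, hbk]
    · apply hne2
      have : wt = -(b k₀) := by rw [hwt, h1]; simp
      calc w = ((wt : Fin d → ℝ)) := rfl
        _ = -v := by rw [this, ← hbk]; rfl
  obtain ⟨i₀, hi₀ne, hi₀⟩ := stepA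
  set sfin : Finset (Fin d) := Finset.univ.erase k₀ with hsfindef
  have hi₀mem : i₀ ∈ sfin := Finset.mem_erase.mpr ⟨hi₀ne, Finset.mem_univ _⟩
  set g : ℤ := sfin.gcd c with hgdef
  have hg0 : g ≠ 0 := fun h => hi₀ (Finset.gcd_eq_zero_iff.mp h i₀ hi₀mem)
  have hgnn : 0 ≤ g := Int.nonneg_of_normalize_eq_self Finset.normalize_gcd
  have hgpos : 0 < g := lt_of_le_of_ne hgnn (Ne.symm hg0)
  set a : ℤ := c k₀ with hadef
  set r : ℤ := a % g with hrdef
  have hr0 : 0 ≤ r := Int.emod_nonneg a hg0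
  have hrg : r < g := Int.emod_lt_of_pos a hgpos
  set a' : ℤ := if 2 * r ≤ g then r else r - g with ha'def
  have habs : 2 * |a'| ≤ g := by
    rw [ha'def]; split
    · rwa [abs_of_nonneg hr0]
    · rw [abs_of_neg (by omega)]; omega
  have hdvd : g ∣ a - a' := by
    have h1 : g ∣ a - r := ⟨a / g, by rw [hrdef, Int.emod_def]; ring⟩
    rw [ha'def]; split
    · exact h1
    · have : a - (r - g) = (a - r) + g := by ring
      rw [this]; exact dvd_add h1 dvd_rfl
  set m : ℤ := (a - a') / g with hmdef
  have hgm : g * m = a - a' := Int.mul_ediv_cancel' hdvd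
  set t : Fin d → ℤ := fun i => if i = k₀ then m else c i / g with htdef
  set ut : Λ := b.equivFun.symm t with hutdef
  have hrepru : ∀ i, b.repr ut i = t i := by
    intro i
    have : b.equivFun ut = t := b.equivFun.apply_symm_apply t
    rw [← this]; rfl
  -- key identity
  have hkey : wt = a' • b k₀ + g • ut := by
    apply b.equivFun.injective
    funext i
    rw [map_add, map_smul, map_smul]
    show c i = (a' • (b.equivFun (b k₀)) + g • (b.equivFun ut)) i
    have hbb : b.equivFun (b k₀) = fun j => if k₀ = j then 1 else 0 := by
      funext j
      show b.repr (b k₀) j = _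
      rw [Module.Basis.repr_self, Finsupp.single_apply]
    have hbu : b.equivFun ut = t := b.equivFun.apply_symm_apply t
    rw [hbb, hbu]
    simp only [Pi.add_apply, Pi.smul_apply, smul_eq_mul, htdef]
    by_cases hik : i = k₀
    · rw [if_pos hik.symm, if_pos hik, mul_one, hgm, hik]
      omega
    · rw [if_neg (fun h => hik h.symm), if_neg hik, mul_zero, zero_add]
      exact (Int.mul_ediv_cancel' (Finset.gcd_dvd (Finset.mem_erase.mpr ⟨hik, Finset.mem_univ _⟩))).symm
  -- gcd of t on sfin is 1
  have hgcdt : sfin.gcd t = 1 := by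
    have hone := Finset.gcd_div_eq_one (f := c) hi₀mem hi₀
    rw [← hone]
    apply Finset.gcd_congr rfl
    intro i hi
    simp only [htdef]
    rw [if_neg (Finset.mem_erase.mp hi).1, hgdef]
  obtain ⟨sc, hsc⟩ := finset_gcd_bezout sfin t
  rw [hgcdt] at hsc
  set φ₂ : Λ →ₗ[ℤ] ℤ := ∑ i ∈ sfin, sc i • b.coord i with hφ₂def
  have hφ₂app : ∀ z : Λ, φ₂ z = ∑ i ∈ sfin, sc i * b.repr z i := by
    intro z
    rw [hφ₂def]
    rw [LinearMap.sum_apply]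
    exact Finset.sum_congr rfl fun i _ => by
      rw [LinearMap.smul_apply, Module.Basis.coord_apply, smul_eq_mul]
  have hφ₂u : φ₂ ut = 1 := by
    rw [hφ₂app]
    rw [Finset.sum_congr rfl fun i _ => by rw [hrepru i]]
    exact hsc
  have hφ₂v : φ₂ (b k₀) = 0 := by
    rw [hφ₂app]
    apply Finset.sum_eq_zero
    intro i hi
    rw [Module.Basis.repr_self, Finsupp.single_apply, if_neg fun h => (Finset.mem_erase.mp hi).1 h.symm,
      mul_zero]
  set φ₁ : Λ →ₗ[ℤ] ℤ := b.coord k₀ - m • φ₂ with hφ₁def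
  have hφ₁v : φ₁ (b k₀) = 1 := by
    rw [hφ₁def, LinearMap.sub_apply, LinearMap.smul_apply, hφ₂v, Module.Basis.coord_apply,
      Module.Basis.repr_self, Finsupp.single_eq_same]
    simp
  have hφ₁u : φ₁ ut = 0 := by
    rw [hφ₁def, LinearMap.sub_apply, LinearMap.smul_apply, hφ₂u, Module.Basis.coord_apply, hrepru,
      htdef]
    simp
  set ψ : Λ →ₗ[ℤ] ℤ × ℤ := φ₁.prod φ₂ with hψdef
  have hψv : ψ (b k₀) = (1, 0) := by
    rw [hψdef, LinearMap.prod_apply]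
    exact Prod.ext (by simpa using hφ₁v) (by simpa using hφ₂v)
  have hψu : ψ ut = (0, 1) := by
    rw [hψdef, LinearMap.prod_apply]
    exact Prod.ext (by simpa using hφ₁u) (by simpa using hφ₂u)
  obtain ⟨b', k, l, hkl, hb'k, hb'l⟩ := exists_basis_pair b hψv hψu
  refine ⟨(ut : Fin d → ℝ), ut.2, ?_, ⟨b', k, l, hkl, by rw [hb'k]; exact hbk, by rw [hb'l]⟩⟩
  -- membership of u in D
  have hgr : (0:ℝ) < (g:ℝ) := by exact_mod_cast hgpos
  have hw' : w = (a' : ℝ) • v + (g : ℝ) • (ut : Fin d → ℝ) := by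
    calc w = ((wt : Fin d → ℝ)) := rfl
      _ = ((a' • b k₀ + g • ut : Λ) : Fin d → ℝ) := by rw [hkey]
      _ = (a' : ℝ) • v + (g : ℝ) • (ut : Fin d → ℝ) := by
          rw [Submodule.coe_add, Submodule.coe_smul, Submodule.coe_smul, hbk,
            Int.cast_smul_eq_zsmul ℝ a' v, Int.cast_smul_eq_zsmul ℝ g]
  have hu : (ut : Fin d → ℝ) = (1 / (g:ℝ)) • w + (-(a':ℝ) / (g:ℝ)) • v := by
    rw [hw']
    match_scalars <;> field_simp <;> ring
  rw [hu]
  apply symm_convex_mem hD hsymm hwD hvD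
  have h1 : (1 + |a'| : ℤ) ≤ g := by omega
  rw [abs_div, abs_div, abs_neg, abs_one, abs_of_pos hgr, ← add_div, div_le_one hgr]
  exact_mod_cast h1


/-- Let `Λ ⊂ ℝ^d` be a lattice of full rank `d` and `D` a bounded symmetric convex set.
If the set `P¹` of primitive vectors of `Λ` lying in `D` has more than two elements,
then `|P¹| ≤ (1/2)|P²|`, where `P²` is the set of primitive pairs of `Λ` with both
entries in `D`. -/
theorem card_primitive_le_card_pairs (d : ℕ) (hd : 2 ≤ d)
    (Λ : Submodule ℤ (Fin d → ℝ))
    (hfull : ∃ b : Module.Basis (Fin d) ℤ Λ,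
      LinearIndependent ℝ (fun k => ((b k : Λ) : Fin d → ℝ)))
    (D : Set (Fin d → ℝ)) (hD : Convex ℝ D)
    (hbdd : Bornology.IsBounded D) (hsymm : -D = D)
    (hcard : 2 < {v | v ∈ Λ ∧ v ∈ D ∧ IsPrimitiveVec d Λ v}.ncard) :
    2 * {v | v ∈ Λ ∧ v ∈ D ∧ IsPrimitiveVec d Λ v}.ncard ≤
      {q : (Fin d → ℝ) × (Fin d → ℝ) | q.1 ∈ Λ ∧ q.1 ∈ D ∧ q.2 ∈ Λ ∧ q.2 ∈ D ∧
        IsPrimitivePair d Λ q.1 q.2}.ncard := by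
  classical
  set A := {v | v ∈ Λ ∧ v ∈ D ∧ IsPrimitiveVec d Λ v} with hAdef
  set B := {q : (Fin d → ℝ) × (Fin d → ℝ) | q.1 ∈ Λ ∧ q.1 ∈ D ∧ q.2 ∈ Λ ∧ q.2 ∈ D ∧
        IsPrimitivePair d Λ q.1 q.2} with hBdef
  have hAfin : A.Finite := by
    by_contra h
    rw [Set.Infinite.ncard h] at hcard
    omega
  have hBsub : B ⊆ A ×ˢ A := by
    rintro ⟨q1, q2⟩ ⟨h1, h2, h3, h4, b, k, l, hkl, hk, hl⟩
    exact ⟨⟨h1, h2, b, k, hk⟩, ⟨h3, h4, b, l, hl⟩⟩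
  have hBfin : B.Finite := (hAfin.prod hAfin).subset hBsub
  have hNeg : ∀ q ∈ B, ((q.1, -q.2) ∈ B ∧ q.2 ≠ -q.2) := by
    rintro ⟨q1, q2⟩ ⟨h1, h2, h3, h4, b, k, l, hkl, hk, hl⟩
    constructor
    · refine ⟨h1, h2, neg_mem h3, ?_, ?_⟩
      · rw [← hsymm]; exact Set.neg_mem_neg.mpr h4
      · refine ⟨b.unitsSMul (fun i => if i = l then -1 else 1), k, l, hkl, ?_, ?_⟩
        · rw [Module.Basis.unitsSMul_apply, if_neg hkl, one_smul]; exact hk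
        · rw [Module.Basis.unitsSMul_apply, if_pos rfl]
          show (((-1 : ℤˣ) • (b l) : Λ) : Fin d → ℝ) = -q2
          rw [Units.neg_smul, one_smul]
          exact_mod_cast congrArg Neg.neg hl
    · intro he
      have he' : q2 = -q2 := he
      have h2q : (2 : ℝ) • q2 = 0 := by
        rw [two_smul]
        nth_rewrite 2 [he']
        simp
      have hq0 : q2 = 0 := by
        rcases smul_eq_zero.mp h2q with h | h
        · norm_num at h
        · exact h
      have hbl0 : (b l : Λ) = 0 := Subtype.val_injective (by rw [hl, hq0]; rfl)
      exact b.ne_zero l hbl0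
  have hEx : ∀ p ∈ A, ∃ uu, (p, uu) ∈ B := by
    intro p hp
    obtain ⟨hpΛ, hpD, hpprim⟩ := hp
    have hex2 : ∃ w ∈ A, w ≠ p ∧ w ≠ -p := by
      by_contra hcon
      push_neg at hcon
      have hsub : A ⊆ {p, -p} := by
        intro z hz
        rcases eq_or_ne z p with h | h
        · exact Set.mem_insert_iff.mpr (Or.inl h)
        · exact Set.mem_insert_iff.mpr (Or.inr (hcon z hz h))
      have hle := Set.ncard_le_ncard hsub ((Set.finite_singleton _).insert _)
      have h2 : ({p, -p} : Set (Fin d → ℝ)).ncard ≤ 2 :=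
        (Set.ncard_insert_le _ _).trans (by rw [Set.ncard_singleton])
      omega
    obtain ⟨w, ⟨hwΛ, hwD, hwprim⟩, hne1, hne2⟩ := hex2
    obtain ⟨uu, huΛ, huD, hupair⟩ :=
      exists_pair_partner hD hsymm hpD hpprim hwΛ hwD hwprim hne1 hne2
    exact ⟨uu, hpΛ, hpD, huΛ, huD, hupair⟩
  have hEx' : ∀ p : Fin d → ℝ, ∃ uu, p ∈ A → (p, uu) ∈ B := by
    intro p
    by_cases hp : p ∈ A
    · exact (hEx p hp).imp fun uu h _ => h
    · exact ⟨0, fun h => absurd h hp⟩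
  choose u hu using hEx'
  set F₁ : (Fin d → ℝ) → (Fin d → ℝ) × (Fin d → ℝ) := fun p => (p, u p) with hF₁def
  set F₂ : (Fin d → ℝ) → (Fin d → ℝ) × (Fin d → ℝ) := fun p => (p, -(u p)) with hF₂def
  have hI₁B : F₁ '' A ⊆ B := by rintro _ ⟨p, hp, rfl⟩; exact hu p hp
  have hI₂B : F₂ '' A ⊆ B := by
    rintro _ ⟨p, hp, rfl⟩
    exact (hNeg _ (hu p hp)).1
  have hdisj : Disjoint (F₁ '' A) (F₂ '' A) := by
    rw [Set.disjoint_left]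
    rintro _ ⟨p, hp, rfl⟩ ⟨q, hq, heq⟩
    have h1 : q = p := congrArg Prod.fst heq
    subst h1
    have h2 : -(u q) = u q := congrArg Prod.snd heq
    exact (hNeg _ (hu q hq)).2 h2.symm
  have hinj₁ : Set.InjOn F₁ A := fun p _ q _ h => congrArg Prod.fst h
  have hinj₂ : Set.InjOn F₂ A := fun p _ q _ h => congrArg Prod.fst h
  calc 2 * A.ncard = A.ncard + A.ncard := by ring
    _ = (F₁ '' A).ncard + (F₂ '' A).ncard := by
        rw [Set.ncard_image_of_injOn hinj₁, Set.ncard_image_of_injOn hinj₂]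
    _ = ((F₁ '' A) ∪ (F₂ '' A)).ncard :=
        (Set.ncard_union_eq hdisj (hAfin.image _) (hAfin.image _)).symm
    _ ≤ B.ncard := Set.ncard_le_ncard (Set.union_subset hI₁B hI₂B) hBfin
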